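/- For every s ∈ {1,...,min(K,N)}, the sequence t ↦ c^s_t is convex on {0,...,K}: for every t ∈ {1,...,K−1}, 2·c^s_t ≤ c^s_{t−1} + c^s_{t+1}. -/

import Mathlib

open Finset

/-- The quantity `c^s_t` from the converse bound. -/
noncomputable def cst (N K r s t : ℕ) : ℝ :=
  (∑ j ∈ Finset.Icc 1 (min (N - r + 1) (min (K - t) s)),
    (((N - j).choose (r - 1) * (K - j).choose t : ℕ) : ℝ)) /
  ((((N - 1).choose (r - 1) : ℕ) : ℝ) * ((K.choose t : ℕ) : ℝ))

lemma key_choose (K t j : ℕ) (ht : t ≤ K) (hj : j ≤ K) :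
    (K - j).choose t * K.choose j = (K - t).choose j * K.choose t := by
  rcases le_or_gt t (K - j) with h | h
  · have hjk : j ≤ K - t := by omega
    have h1 := Nat.choose_mul (n := K) h
    have e : K - j - t = K - t - j := by omega
    rw [e, Nat.choose_symm hjk] at h1
    rw [← Nat.choose_symm hj, mul_comm, h1, mul_comm]
  · have h2 : K - t < j := by omega
    rw [Nat.choose_eq_zero_of_lt h, Nat.choose_eq_zero_of_lt h2]
    ring

lemma convex_choose (m j : ℕ) (hm : 1 ≤ m) :
    2 * m.choose j ≤ (m + 1).choose j + (m - 1).choose j := by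
  obtain ⟨m', rfl⟩ : ∃ m', m = m' + 1 := ⟨m - 1, by omega⟩
  cases j with
  | zero => simp
  | succ j =>
    have e1 : (m' + 1 + 1).choose (j + 1) = (m' + 1).choose j + (m' + 1).choose (j + 1) :=
      Nat.choose_succ_succ' (m' + 1) j ▸ rfl
    have e2 : (m' + 1).choose (j + 1) = m'.choose j + m'.choose (j + 1) :=
      Nat.choose_succ_succ' m' j ▸ rfl
    have e3 : m'.choose j ≤ (m' + 1).choose j := Nat.choose_le_choose j (by omega)
    simp only [Nat.add_sub_cancel]
    omega

lemma cst_eq (N K r s t : ℕ) (hr : 1 ≤ r) (hrN : r ≤ N) (hsK : s ≤ K) (ht : t ≤ K) :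
    cst N K r s t = (∑ j ∈ Finset.Icc 1 (min (N - r + 1) s),
      (((N - j).choose (r - 1) : ℕ) : ℝ) * (((K - t).choose j : ℕ) : ℝ) /
        ((K.choose j : ℕ) : ℝ)) / (((N - 1).choose (r - 1) : ℕ) : ℝ) := by
  unfold cst
  have hsub : Finset.Icc 1 (min (N - r + 1) (min (K - t) s)) ⊆
      Finset.Icc 1 (min (N - r + 1) s) := by
    apply Finset.Icc_subset_Icc_right
    omega
  have hext : (∑ j ∈ Finset.Icc 1 (min (N - r + 1) (min (K - t) s)),
      (((N - j).choose (r - 1) * (K - j).choose t : ℕ) : ℝ)) =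
      ∑ j ∈ Finset.Icc 1 (min (N - r + 1) s),
      (((N - j).choose (r - 1) * (K - j).choose t : ℕ) : ℝ) := by
    apply Finset.sum_subset hsub
    intro j hj hj2
    simp only [Finset.mem_Icc] at hj hj2
    have hjt : K - j < t := by omega
    rw [Nat.choose_eq_zero_of_lt hjt]
    simp
  rw [hext, div_mul_eq_div_div_swap]
  congr 1
  rw [Finset.sum_div]
  apply Finset.sum_congr rfl
  intro j hj
  simp only [Finset.mem_Icc] at hj
  have hjK : j ≤ K := by omega
  have hKt : (0 : ℝ) < (K.choose t : ℝ) := by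
    exact_mod_cast Nat.choose_pos ht
  have hKj : (0 : ℝ) < (K.choose j : ℝ) := by
    exact_mod_cast Nat.choose_pos hjK
  have hid : ((K - j).choose t : ℝ) * (K.choose j : ℝ) =
      ((K - t).choose j : ℝ) * (K.choose t : ℝ) := by
    exact_mod_cast congrArg (Nat.cast : ℕ → ℝ) (key_choose K t j ht hjK)
  push_cast
  field_simp
  nlinarith [hid]

theorem statement15 (N K r s : ℕ) (hN : 1 ≤ N) (hK : 1 ≤ K) (hr : 1 ≤ r) (hrN : r ≤ N)
    (hs1 : 1 ≤ s) (hs2 : s ≤ min K N) :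
    ∀ t : ℕ, 1 ≤ t → t ≤ K - 1 →
      2 * cst N K r s t ≤ cst N K r s (t - 1) + cst N K r s (t + 1) := by
  intro t ht1 ht2
  have hsK : s ≤ K := le_trans hs2 (min_le_left _ _)
  have htK : t ≤ K := by omega
  have ht1K : t - 1 ≤ K := by omega
  have ht2K : t + 1 ≤ K := by omega
  rw [cst_eq N K r s t hr hrN hsK htK, cst_eq N K r s (t - 1) hr hrN hsK ht1K,
    cst_eq N K r s (t + 1) hr hrN hsK ht2K]
  have hD : (0 : ℝ) < (((N - 1).choose (r - 1) : ℕ) : ℝ) := by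
    exact_mod_cast Nat.choose_pos (by omega : r - 1 ≤ N - 1)
  rw [← add_div, ← mul_div_assoc]
  gcongr
  rw [← Finset.sum_add_distrib, Finset.mul_sum]
  apply Finset.sum_le_sum
  intro j hj
  have e1 : K - (t - 1) = (K - t) + 1 := by omega
  have e2 : K - (t + 1) = (K - t) - 1 := by omega
  rw [e1, e2]
  have h := convex_choose (K - t) j (by omega)
  have hR : (2 : ℝ) * ((K - t).choose j : ℝ) ≤
      (((K - t) + 1).choose j : ℝ) + (((K - t) - 1).choose j : ℝ) := by
    exact_mod_cast h
  have hjK : j ≤ K := by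
    simp only [Finset.mem_Icc] at hj
    omega
  have hCj : (0 : ℝ) ≤ ((K.choose j : ℕ) : ℝ) := by positivity
  have ha : (0 : ℝ) ≤ (((N - j).choose (r - 1) : ℕ) : ℝ) := by positivity
  rw [← add_div, ← mul_div_assoc]
  gcongr
  nlinarith [hR, ha]
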